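/- Let K be an algebraically closed field of characteristic p ≥ 0 and f ∈ K[X] a polynomial of degree d ≥ 2. Fix a periodic point ζ ∈ K of f with least period m, and set λ = (f⁽ᵐ⁾)′(ζ). Then for n ≥ 1 one has aₙ*(ζ) ≥ 1 if and only if one of the following holds: (1) n = m; (2) λ is a root of unity of multiplicative order r in K* and n = m·r; (3) p > 0, λ is a root of unity of multiplicative order r in K*, and n = pᵉ·m·r for some e ≥ 1. -/

import Mathlib

open Polynomial

/-- The `n`-th compositional iterate of a polynomial, with `f⁽⁰⁾ = X`. -/
noncomputable def polyIter {K : Type*} [CommSemiring K] (f : K[X]) : ℕ → K[X]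
  | 0 => X
  | n + 1 => f.comp (polyIter f n)

section MSbasic

variable {K : Type*} [Field K]

lemma MS_polyIter_zero (f : K[X]) : polyIter f 0 = X := rfl

lemma MS_polyIter_succ (f : K[X]) (n : ℕ) : polyIter f (n + 1) = f.comp (polyIter f n) := rfl

lemma MS_polyIter_one (f : K[X]) : polyIter f 1 = f := by
  rw [MS_polyIter_succ, MS_polyIter_zero, comp_X]

lemma MS_polyIter_add (f : K[X]) (a b : ℕ) :
    polyIter f (a + b) = (polyIter f a).comp (polyIter f b) := by
  induction a with
  | zero => rw [MS_polyIter_zero, X_comp, Nat.zero_add]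
  | succ a ih =>
    have : a + 1 + b = (a + b) + 1 := by omega
    rw [this, MS_polyIter_succ, ih, MS_polyIter_succ, comp_assoc]

lemma MS_polyIter_mul (f : K[X]) (a b : ℕ) :
    polyIter f (a * b) = polyIter (polyIter f a) b := by
  induction b with
  | zero => rfl
  | succ b ih =>
    have : a * (b + 1) = a + a * b := by ring
    rw [this, MS_polyIter_add, ih, MS_polyIter_succ]

lemma MS_eval_polyIter (f : K[X]) (n : ℕ) (x : K) :
    (polyIter f n).eval x = (fun y => f.eval y)^[n] x := by
  induction n with
  | zero => simp [MS_polyIter_zero]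
  | succ n ih => rw [MS_polyIter_succ, eval_comp, ih, Function.iterate_succ_apply']

lemma MS_polyIter_fixed (g : K[X]) {ζ : K} (h : g.eval ζ = ζ) (s : ℕ) :
    (polyIter g s).eval ζ = ζ := by
  rw [MS_eval_polyIter]
  exact Function.iterate_fixed h s

lemma MS_natDegree_polyIter (f : K[X]) (n : ℕ) :
    (polyIter f n).natDegree = f.natDegree ^ n := by
  induction n with
  | zero => simp [MS_polyIter_zero]
  | succ n ih => rw [MS_polyIter_succ, natDegree_comp, ih, pow_succ]; ring

lemma MS_polyIter_sub_X_ne_zero {f : K[X]} (hdeg : 2 ≤ f.natDegree) {n : ℕ} (hn : 1 ≤ n) :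
    polyIter f n - X ≠ 0 := by
  intro h
  have h2 : polyIter f n = X := by
    have := sub_eq_zero.mp h; exact this
  have h3 := MS_natDegree_polyIter f n
  rw [h2, natDegree_X] at h3
  have h4 : 1 < f.natDegree ^ n := Nat.one_lt_pow (by omega) (by omega)
  omega

lemma MS_derivative_polyIter (g : K[X]) {ζ : K} (hfix : g.eval ζ = ζ) (s : ℕ) :
    (polyIter g s).derivative.eval ζ = (g.derivative.eval ζ) ^ s := by
  induction s with
  | zero => simp [MS_polyIter_zero]
  | succ s ih =>
    rw [MS_polyIter_succ, derivative_comp, eval_mul, eval_comp, MS_polyIter_fixed g hfix s,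
      ih, pow_succ]

lemma MS_mult_eq_one {q : K[X]} {ζ : K} (h0 : q.IsRoot ζ) (h1 : ¬ (derivative q).IsRoot ζ) :
    rootMultiplicity ζ q = 1 := by
  have hq : q ≠ 0 := by rintro rfl; exact h1 (by simp)
  have hpos : 0 < rootMultiplicity ζ q := (rootMultiplicity_pos hq).mpr h0
  have hlt : ¬ 1 < rootMultiplicity ζ q := by
    rw [one_lt_rootMultiplicity_iff_isRoot hq]
    rintro ⟨-, h⟩; exact h1 h
  omega

lemma MS_two_le_mult {q : K[X]} {ζ : K} (hq : q ≠ 0) (h0 : q.IsRoot ζ)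
    (h1 : (derivative q).IsRoot ζ) : 2 ≤ rootMultiplicity ζ q := by
  have := (one_lt_rootMultiplicity_iff_isRoot hq).mpr ⟨h0, h1⟩
  omega

end MSbasic
/-- `aₙ(ξ)`: the multiplicity of `ξ` as a root of `f⁽ⁿ⁾(X) - X`. -/
noncomputable def aMult {K : Type*} [Field K] (f : K[X]) (n : ℕ) (ξ : K) : ℕ :=
  rootMultiplicity ξ (polyIter f n - X)

/-- `aₙ*(ξ) = Σ_{k ∣ n} μ(n/k)·a_k(ξ)`. -/
noncomputable def aStar {K : Type*} [Field K] (f : K[X]) (n : ℕ) (ξ : K) : ℤ :=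
  ∑ k ∈ n.divisors, (ArithmeticFunction.moebius (n / k)) * (aMult f k ξ : ℤ)
section MScore

variable {K : Type*} [Field K]

lemma MS_core (g : K[X]) {ζ : K} (hfix : g.eval ζ = ζ) (hne : g - X ≠ 0) :
    ∃ c : K, c ≠ 0 ∧ ∀ s : ℕ, ∃ V : K[X],
      polyIter g s - X = (X - C ζ) ^ (rootMultiplicity ζ (g - X)) * V ∧
      V.eval ζ = c * ∑ i ∈ Finset.range s,
        (g.derivative.eval ζ) ^ (i * rootMultiplicity ζ (g - X)) := by
  set b := rootMultiplicity ζ (g - X) with hb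
  set lam := g.derivative.eval ζ with hl
  set u := (g - X) /ₘ (X - C ζ) ^ b with hu
  have hgu : (X - C ζ) ^ b * u = g - X := pow_mul_divByMonic_rootMultiplicity_eq (g - X) ζ
  have hc : u.eval ζ ≠ 0 := eval_divByMonic_pow_rootMultiplicity_ne_zero ζ hne
  refine ⟨u.eval ζ, hc, ?_⟩
  intro s
  induction s with
  | zero => exact ⟨0, by simp [MS_polyIter_zero], by simp⟩
  | succ s ih =>
    obtain ⟨V, hV1, hV2⟩ := ih
    set P := polyIter g s with hP
    have hPfix : P.eval ζ = ζ := MS_polyIter_fixed g hfix s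
    have hdvd : (X - C ζ) ∣ (P - C ζ) := dvd_iff_isRoot.mpr (by simp [IsRoot, hPfix])
    obtain ⟨w, hw⟩ := hdvd
    have hweval : w.eval ζ = lam ^ s := by
      have hD : derivative P = w + (X - C ζ) * derivative w := by
        have : derivative (P - C ζ) = derivative P := by simp
        rw [← this, hw, derivative_mul]
        simp
      have h2 := congrArg (eval ζ) hD
      rw [MS_derivative_polyIter g hfix s] at h2
      simpa using h2.symm
    refine ⟨V + w ^ b * u.comp P, ?_, ?_⟩
    · have hstep : polyIter g (s + 1) - X = (P - X) + (g - X).comp P := by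
        rw [MS_polyIter_succ, sub_comp, X_comp, ← hP]
        ring
      rw [hstep, hV1, ← hgu, mul_comp, pow_comp, sub_comp, X_comp, C_comp, hw,
        mul_pow]
      ring
    · rw [eval_add, hV2, eval_mul, eval_pow, hweval, eval_comp, hPfix, Finset.sum_range_succ,
        ← pow_mul]
      ring

lemma MS_mult_iter_eq (g : K[X]) {ζ : K} (hfix : g.eval ζ = ζ) (hne : g - X ≠ 0) (s : ℕ)
    (hS : (∑ i ∈ Finset.range s,
        (g.derivative.eval ζ) ^ (i * rootMultiplicity ζ (g - X))) ≠ 0) :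
    rootMultiplicity ζ (polyIter g s - X) = rootMultiplicity ζ (g - X) := by
  obtain ⟨c, hc, h⟩ := MS_core g hfix hne
  obtain ⟨V, h1, h2⟩ := h s
  have hVe : V.eval ζ ≠ 0 := by rw [h2]; exact mul_ne_zero hc hS
  have hV0 : V ≠ 0 := fun h => hVe (by simp [h])
  have hVm : rootMultiplicity ζ V = 0 := rootMultiplicity_eq_zero (by simpa [IsRoot] using hVe)
  rw [h1, rootMultiplicity_mul (mul_ne_zero (pow_ne_zero _ (X_sub_C_ne_zero ζ)) hV0),
    rootMultiplicity_X_sub_C_pow, hVm, add_zero]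

lemma MS_mult_iter_gt (g : K[X]) {ζ : K} (hfix : g.eval ζ = ζ) (hne : g - X ≠ 0) (s : ℕ)
    (hne2 : polyIter g s - X ≠ 0)
    (hS : (∑ i ∈ Finset.range s,
        (g.derivative.eval ζ) ^ (i * rootMultiplicity ζ (g - X))) = 0) :
    rootMultiplicity ζ (g - X) + 1 ≤ rootMultiplicity ζ (polyIter g s - X) := by
  obtain ⟨c, hc, h⟩ := MS_core g hfix hne
  obtain ⟨V, h1, h2⟩ := h s
  have hdvd : (X - C ζ) ∣ V := dvd_iff_isRoot.mpr (by simp [IsRoot, h2, hS])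
  obtain ⟨W, rfl⟩ := hdvd
  rw [le_rootMultiplicity_iff hne2, h1]
  exact ⟨W, by ring⟩

end MScore
section MSmoebius

lemma MS_moebius_sum (n : ℕ) :
    (∑ k ∈ n.divisors, (ArithmeticFunction.moebius (n / k) : ℤ)) =
      if n = 1 then 1 else 0 := by
  rw [Nat.sum_div_divisors n (fun d => (ArithmeticFunction.moebius d : ℤ))]
  have h := ArithmeticFunction.coe_mul_zeta_apply
    (f := (ArithmeticFunction.moebius : ArithmeticFunction ℤ)) (x := n)
  rw [ArithmeticFunction.moebius_mul_coe_zeta] at h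
  rw [← h, ArithmeticFunction.one_apply]

lemma MS_reindex (m t : ℕ) (hm : m ≠ 0) (ht : t ≠ 0) (F : ℕ → ℤ)
    (hF : ∀ k, ¬ m ∣ k → F k = 0) :
    ∑ k ∈ (m * t).divisors, (ArithmeticFunction.moebius ((m * t) / k) : ℤ) * F k
      = ∑ j ∈ t.divisors, (ArithmeticFunction.moebius (t / j) : ℤ) * F (m * j) := by
  classical
  have hmt : m * t ≠ 0 := by positivity
  have key : (m * t).divisors.filter (fun k => m ∣ k) =
      t.divisors.map ⟨fun j => m * j, fun a b h =>
        Nat.eq_of_mul_eq_mul_left (Nat.pos_of_ne_zero hm) h⟩ := by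
    ext k
    simp only [Finset.mem_filter, Nat.mem_divisors, Finset.mem_map,
      Function.Embedding.coeFn_mk]
    constructor
    · rintro ⟨⟨hk, -⟩, j, rfl⟩
      exact ⟨j, ⟨(Nat.mul_dvd_mul_iff_left (Nat.pos_of_ne_zero hm)).mp hk, ht⟩, rfl⟩
    · rintro ⟨j, ⟨hj, -⟩, rfl⟩
      exact ⟨⟨Nat.mul_dvd_mul_left m hj, hmt⟩, Dvd.intro j rfl⟩
  rw [← Finset.sum_filter_add_sum_filter_not ((m * t).divisors) (fun k => m ∣ k)]
  have h2 : (∑ k ∈ (m * t).divisors.filter (fun k => ¬ m ∣ k),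
      (ArithmeticFunction.moebius ((m * t) / k) : ℤ) * F k) = 0 := by
    apply Finset.sum_eq_zero
    intro k hk
    rw [hF k (Finset.mem_filter.mp hk).2, mul_zero]
  rw [h2, add_zero, key, Finset.sum_map]
  apply Finset.sum_congr rfl
  intro j hj
  show (ArithmeticFunction.moebius (m * t / (m * j)) : ℤ) * F (m * j) = _
  rw [Nat.mul_div_mul_left _ _ (Nat.pos_of_ne_zero hm)]

lemma MS_indicator_sum (n q : ℕ) (hn : n ≠ 0) (hq : q ≠ 0) :
    (∑ k ∈ n.divisors, (ArithmeticFunction.moebius (n / k) : ℤ) *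
      (if q ∣ k then 1 else 0)) = if n = q then 1 else 0 := by
  by_cases hqn : q ∣ n
  · obtain ⟨t, rfl⟩ := hqn
    have ht : t ≠ 0 := by rintro rfl; exact hn (by ring)
    rw [MS_reindex q t hq ht _ (fun k hk => if_neg hk)]
    have : ∀ j ∈ t.divisors, (ArithmeticFunction.moebius (t / j) : ℤ) *
        (if q ∣ q * j then 1 else 0) = (ArithmeticFunction.moebius (t / j) : ℤ) := by
      intro j hj
      rw [if_pos (Dvd.intro j rfl), mul_one]
    rw [Finset.sum_congr rfl this, MS_moebius_sum]
    have : q * t = q ↔ t = 1 := by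
      constructor
      · intro h
        exact Nat.eq_of_mul_eq_mul_left (Nat.pos_of_ne_zero hq) (by omega)
      · rintro rfl; ring
    simp only [this]
  · have hz : ∀ k ∈ n.divisors, (ArithmeticFunction.moebius (n / k) : ℤ) *
        (if q ∣ k then 1 else 0) = 0 := by
      intro k hk
      rw [if_neg (fun h => hqn (h.trans (Nat.mem_divisors.mp hk).1)), mul_zero]
    rw [Finset.sum_eq_zero hz, if_neg (by rintro rfl; exact hqn dvd_rfl)]

end MSmoebius
section MSvalues

variable {K : Type*} [Field K]

lemma MS_aMult_vanish {f : K[X]} {ζ : K} {k : ℕ}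
    (hk : ¬ (Function.minimalPeriod (fun x => f.eval x) ζ) ∣ k) :
    aMult f k ζ = 0 := by
  apply rootMultiplicity_eq_zero
  simp only [IsRoot, eval_sub, eval_X, MS_eval_polyIter, sub_eq_zero]
  intro h
  exact hk (Function.IsPeriodicPt.minimalPeriod_dvd h)

lemma MS_aMult_eq_one {f : K[X]} {ζ : K} {m : ℕ}
    (hfix : (polyIter f m).eval ζ = ζ) {j : ℕ}
    (hne1 : ((polyIter f m).derivative.eval ζ) ^ j ≠ 1) :
    aMult f (m * j) ζ = 1 := by
  unfold aMult
  rw [MS_polyIter_mul]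
  apply MS_mult_eq_one
  · simp [IsRoot, MS_polyIter_fixed _ hfix j]
  · simp only [IsRoot, derivative_sub, derivative_X, eval_sub, eval_one]
    rw [MS_derivative_polyIter _ hfix j]
    exact sub_ne_zero.mpr hne1

lemma MS_aMult_scale {f : K[X]} (hdeg : 2 ≤ f.natDegree) {ζ : K} {N : ℕ}
    (hN : 1 ≤ N) (hfix : (polyIter f N).eval ζ = ζ)
    (hmul : (polyIter f N).derivative.eval ζ = 1)
    {w : ℕ} (hw : (w : K) ≠ 0) : aMult f (N * w) ζ = aMult f N ζ := by
  unfold aMult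
  rw [MS_polyIter_mul]
  apply MS_mult_iter_eq _ hfix (MS_polyIter_sub_X_ne_zero hdeg hN)
  rw [hmul]
  simpa using hw

lemma MS_aMult_jump {f : K[X]} (hdeg : 2 ≤ f.natDegree) {ζ : K} {N : ℕ}
    (hN : 1 ≤ N) (hfix : (polyIter f N).eval ζ = ζ)
    (hmul : (polyIter f N).derivative.eval ζ = 1)
    {s : ℕ} (hs : 1 ≤ s) (hsK : (s : K) = 0) :
    aMult f N ζ + 1 ≤ aMult f (N * s) ζ := by
  unfold aMult
  rw [MS_polyIter_mul]
  apply MS_mult_iter_gt _ hfix (MS_polyIter_sub_X_ne_zero hdeg hN) s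
  · rw [← MS_polyIter_mul]
    exact MS_polyIter_sub_X_ne_zero hdeg (by exact Nat.one_le_iff_ne_zero.mpr (by positivity))
  · rw [hmul]
    simpa using hsK

lemma MS_aMult_ge_two {f : K[X]} (hdeg : 2 ≤ f.natDegree) {ζ : K} {N : ℕ}
    (hN : 1 ≤ N) (hfix : (polyIter f N).eval ζ = ζ)
    (hmul : (polyIter f N).derivative.eval ζ = 1) :
    2 ≤ aMult f N ζ := by
  apply MS_two_le_mult (MS_polyIter_sub_X_ne_zero hdeg hN)
  · simp [IsRoot, hfix]
  · simp [IsRoot, hmul]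

end MSvalues
section MSformula

variable {K : Type*} [Field K]

lemma MS_aStar_formula (f : K[X]) (ζ : K) (m t : ℕ) (hm : m ≠ 0) (ht : t ≠ 0)
    (E : ℕ) (q : ℕ → ℕ) (hq : ∀ e, q e ≠ 0) (δ : ℕ → ℤ)
    (hvan : ∀ k, ¬ m ∣ k → aMult f k ζ = 0)
    (hval : ∀ j, j ∣ t → j ≠ 0 → (aMult f (m * j) ζ : ℤ) =
      1 + ∑ e ∈ Finset.range E, δ e * (if q e ∣ j then 1 else 0)) :
    aStar f (m * t) ζ = (if t = 1 then 1 else 0) +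
      ∑ e ∈ Finset.range E, δ e * (if t = q e then 1 else 0) := by
  unfold aStar
  rw [MS_reindex m t hm ht _ (fun k hk => by rw [hvan k hk]; simp)]
  have hstep : ∀ j ∈ t.divisors, (ArithmeticFunction.moebius (t / j) : ℤ) *
      (aMult f (m * j) ζ : ℤ)
      = (ArithmeticFunction.moebius (t / j) : ℤ) +
        ∑ e ∈ Finset.range E, δ e * ((ArithmeticFunction.moebius (t / j) : ℤ) *
          (if q e ∣ j then 1 else 0)) := by
    intro j hj
    rw [hval j (Nat.mem_divisors.mp hj).1 (Nat.pos_of_mem_divisors hj).ne', mul_add, mul_one,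
      Finset.mul_sum]
    congr 1
    apply Finset.sum_congr rfl
    intro e he
    ring
  rw [Finset.sum_congr rfl hstep, Finset.sum_add_distrib, MS_moebius_sum t, Finset.sum_comm]
  congr 1
  apply Finset.sum_congr rfl
  intro e he
  rw [← Finset.mul_sum, MS_indicator_sum t (q e) ht (hq e)]

end MSformula
/-- Morton–Silverman: over an algebraically closed field of characteristic
`p ≥ 0`, for a periodic point `ζ` of least period `m` with multiplier `λ = (f⁽ᵐ⁾)'(ζ)`,
one has `aₙ*(ζ) ≥ 1` iff `n = m`, or `λ` is a root of unity of order `r` and `n = m·r`,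
or `p > 0`, `λ` is a root of unity of order `r`, and `n = pᵉ·m·r` for some `e ≥ 1`. -/
theorem stmt5 {K : Type*} [Field K] [IsAlgClosed K] (p : ℕ) [CharP K p]
    (f : K[X]) (d : ℕ) (hd : 2 ≤ d) (hdeg : f.natDegree = d)
    (ζ : K) (hζ : ζ ∈ Function.periodicPts (fun x => f.eval x))
    (m : ℕ) (hm : m = Function.minimalPeriod (fun x => f.eval x) ζ)
    (lam : K) (hlam : lam = (polyIter f m).derivative.eval ζ)
    (n : ℕ) (hn : 1 ≤ n) :
    1 ≤ aStar f n ζ ↔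
      n = m ∨
      (IsOfFinOrder lam ∧ n = m * orderOf lam) ∨
      (0 < p ∧ IsOfFinOrder lam ∧ ∃ e : ℕ, 1 ≤ e ∧ n = p ^ e * m * orderOf lam) := by
  have hdeg2 : 2 ≤ f.natDegree := by omega
  have hm0 : 0 < m := by
    rw [hm]; exact Function.minimalPeriod_pos_of_mem_periodicPts hζ
  have hfix : (polyIter f m).eval ζ = ζ := by
    rw [MS_eval_polyIter, hm]
    exact Function.iterate_minimalPeriod
  have hvan : ∀ k, ¬ m ∣ k → aMult f k ζ = 0 := by
    intro k hk
    apply MS_aMult_vanish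
    rwa [← hm]
  have hfixmul : ∀ k, (polyIter f (m * k)).eval ζ = ζ := fun k => by
    rw [MS_polyIter_mul]; exact MS_polyIter_fixed _ hfix k
  have hstar0 : ¬ m ∣ n → aStar f n ζ = 0 := by
    intro hmn
    unfold aStar
    apply Finset.sum_eq_zero
    intro k hk
    rw [hvan k (fun h => hmn (h.trans (Nat.mem_divisors.mp hk).1))]
    simp
  by_cases hfin : IsOfFinOrder lam
  case neg =>
    have hform : ∀ t : ℕ, t ≠ 0 → aStar f (m * t) ζ = (if t = 1 then 1 else 0) := by
      intro t ht
      have := MS_aStar_formula f ζ m t hm0.ne' ht 0 (fun _ => 1) (fun _ => one_ne_zero)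
        (fun _ => 0) hvan ?_
      · simpa using this
      · intro j hj hj0
        rw [MS_aMult_eq_one hfix (j := j) ?_]
        · simp
        · intro h
          exact hfin (isOfFinOrder_iff_pow_eq_one.mpr
            ⟨j, Nat.pos_of_ne_zero hj0, by rw [hlam]; exact h⟩)
    constructor
    · intro h1
      have hdvd : m ∣ n := by
        by_contra hmn
        rw [hstar0 hmn] at h1; omega
      obtain ⟨t, rfl⟩ := hdvd
      have ht : t ≠ 0 := by rintro rfl; simp at hn
      rw [hform t ht] at h1
      left
      by_cases h : t = 1
      · rw [h, mul_one]
      · rw [if_neg h] at h1; omega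
    · rintro (hcase | ⟨hf, -⟩ | ⟨-, hf, -⟩)
      · have h2 := hform 1 one_ne_zero
        rw [mul_one] at h2
        rw [hcase, h2]
        simp
      · exact absurd hf hfin
      · exact absurd hf hfin
  case pos =>
    set r := orderOf lam with hrdef
    have hr0 : 0 < r := hfin.orderOf_pos
    have hmul1 : ∀ k, r ∣ k → (polyIter f (m * k)).derivative.eval ζ = 1 := by
      intro k hk
      rw [MS_polyIter_mul, MS_derivative_polyIter _ hfix k, ← hlam]
      exact orderOf_dvd_iff_pow_eq_one.mp hk
    have hone : ∀ j, ¬ r ∣ j → aMult f (m * j) ζ = 1 := by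
      intro j hj
      apply MS_aMult_eq_one hfix
      rw [← hlam]
      exact fun h => hj (orderOf_dvd_iff_pow_eq_one.mpr h)
    rcases Nat.eq_zero_or_pos p with hp0 | hp
    -- characteristic zero case
    · have hNfix := hfixmul r
      have hNmul := hmul1 r dvd_rfl
      have hN1 : 1 ≤ m * r := Nat.one_le_iff_ne_zero.mpr (by positivity)
      set c0 := aMult f (m * r) ζ with hc0def
      have hc0 : 2 ≤ c0 := MS_aMult_ge_two hdeg2 hN1 hNfix hNmul
      have hc0' : (2:ℤ) ≤ (c0:ℤ) := by exact_mod_cast hc0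
      have hcast : ∀ w : ℕ, w ≠ 0 → (w : K) ≠ 0 := by
        intro w hw h
        rw [CharP.cast_eq_zero_iff K p w, hp0, zero_dvd_iff] at h
        exact hw h
      have hform : ∀ t : ℕ, t ≠ 0 → aStar f (m * t) ζ =
          (if t = 1 then 1 else 0) + ((c0 : ℤ) - 1) * (if t = r then 1 else 0) := by
        intro t ht
        have := MS_aStar_formula f ζ m t hm0.ne' ht 1 (fun _ => r) (fun _ => hr0.ne')
          (fun _ => (c0 : ℤ) - 1) hvan ?_
        · rw [this, Finset.sum_range_one]
        · intro j hj hj0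
          by_cases hrj : r ∣ j
          · obtain ⟨j', rfl⟩ := hrj
            have hj'0 : j' ≠ 0 := by rintro rfl; exact hj0 (by ring)
            have hidx : m * (r * j') = (m * r) * j' := by ring
            rw [hidx, MS_aMult_scale hdeg2 hN1 hNfix hNmul (hcast j' hj'0), ← hc0def,
              Finset.sum_range_one, if_pos (Dvd.intro j' rfl)]
            ring
          · rw [hone _ hrj, Finset.sum_range_one, if_neg hrj]
            simp
      have hge : ∀ t : ℕ, t ≠ 0 → (t = 1 ∨ t = r) → 1 ≤ aStar f (m * t) ζ := by
        intro t ht hcases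
        rw [hform t ht]
        have hnn1 : (0:ℤ) ≤ (if t = 1 then 1 else 0) := by split <;> norm_num
        have hnn2 : (0:ℤ) ≤ ((c0:ℤ) - 1) * (if t = r then 1 else 0) :=
          mul_nonneg (by linarith) (by split <;> norm_num)
        rcases hcases with h | h
        · rw [if_pos h]; linarith
        · have h2 : ((c0:ℤ) - 1) * (if t = r then 1 else 0) = (c0:ℤ) - 1 := by
            rw [if_pos h, mul_one]
          rw [h2]; linarith
      constructor
      · intro h1
        have hdvd : m ∣ n := by
          by_contra hmn
          rw [hstar0 hmn] at h1; omega
        obtain ⟨t, rfl⟩ := hdvd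
        have ht : t ≠ 0 := by rintro rfl; simp at hn
        rw [hform t ht] at h1
        by_cases h : t = 1
        · left; rw [h, mul_one]
        · right; left
          refine ⟨hfin, ?_⟩
          rw [if_neg h] at h1
          by_cases h2 : t = r
          · rw [h2]
          · rw [if_neg h2, mul_zero] at h1; omega
      · rintro (hcase | ⟨-, hcase⟩ | ⟨hp', -, -⟩)
        · have h2 := hge 1 one_ne_zero (Or.inl rfl)
          rwa [mul_one, ← hcase] at h2
        · rw [hcase]
          exact hge r hr0.ne' (Or.inr rfl)
        · omega
    -- positive characteristic case
    · have hprime : p.Prime := (CharP.char_is_prime_or_zero K p).resolve_right (by omega)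
      set c : ℕ → ℕ := fun e => aMult f (m * (r * p ^ e)) ζ with hcdef
      set δ : ℕ → ℤ := fun e => if e = 0 then (c 0 : ℤ) - 1 else (c e : ℤ) - c (e - 1)
        with hδdef
      have hNfix : ∀ e : ℕ, (polyIter f (m * (r * p ^ e))).eval ζ = ζ := fun e => hfixmul _
      have hNmul : ∀ e : ℕ, (polyIter f (m * (r * p ^ e))).derivative.eval ζ = 1 :=
        fun e => hmul1 _ (Dvd.intro _ rfl)
      have hN1 : ∀ e : ℕ, 1 ≤ m * (r * p ^ e) := fun e =>
        Nat.one_le_iff_ne_zero.mpr (by positivity)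
      have hc0 : 2 ≤ c 0 := MS_aMult_ge_two hdeg2 (hN1 0) (hNfix 0) (hNmul 0)
      have hjump : ∀ e, c e + 1 ≤ c (e + 1) := by
        intro e
        have h1 : m * (r * p ^ e) * p = m * (r * p ^ (e + 1)) := by ring
        have h2 := MS_aMult_jump hdeg2 (hN1 e) (hNfix e) (hNmul e) (s := p) (by omega)
          (CharP.cast_eq_zero K p)
        rw [h1] at h2
        exact h2
      have hδpos : ∀ e, 1 ≤ δ e := by
        intro e
        rcases e with _ | e
        · have h2 : (2:ℤ) ≤ (c 0 : ℤ) := by exact_mod_cast hc0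
          simp only [hδdef, if_pos rfl]
          linarith
        · have h2 := hjump e
          have h3 : (c e : ℤ) + 1 ≤ (c (e + 1) : ℤ) := by exact_mod_cast h2
          simp only [hδdef, Nat.succ_ne_zero, if_false, Nat.add_sub_cancel]
          linarith
      have htel : ∀ N, (∑ e ∈ Finset.range (N + 1), δ e) = (c N : ℤ) - 1 := by
        intro N
        induction N with
        | zero => simp [hδdef]
        | succ N ih =>
          rw [Finset.sum_range_succ, ih]
          simp only [hδdef, Nat.succ_ne_zero, if_false, Nat.add_sub_cancel]
          ring
      have hform : ∀ t : ℕ, t ≠ 0 → aStar f (m * t) ζ =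
          (if t = 1 then 1 else 0) +
          ∑ e ∈ Finset.range (t + 1), δ e * (if t = r * p ^ e then 1 else 0) := by
        intro t ht
        apply MS_aStar_formula f ζ m t hm0.ne' ht (t + 1) (fun e => r * p ^ e)
          (fun e => by positivity) δ hvan
        intro j hjdvd hj0
        by_cases hrj : r ∣ j
        · obtain ⟨j', rfl⟩ := hrj
          have hj'0 : j' ≠ 0 := by rintro rfl; exact hj0 (by ring)
          have hwdvd : p ^ (j'.factorization p) ∣ j' := Nat.ordProj_dvd j' p
          have hw : j' = p ^ (j'.factorization p) * (j' / p ^ (j'.factorization p)) :=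
            (Nat.mul_div_cancel' hwdvd).symm
          have hwnd : ¬ p ∣ (j' / p ^ (j'.factorization p)) :=
            Nat.not_dvd_ordCompl hprime hj'0
          have hwK : ((j' / p ^ (j'.factorization p) : ℕ) : K) ≠ 0 := by
            intro h
            exact hwnd ((CharP.cast_eq_zero_iff K p _).mp h)
          have hidx : m * (r * j') = (m * (r * p ^ (j'.factorization p))) *
              (j' / p ^ (j'.factorization p)) := by
            conv_lhs => rw [hw]
            ring
          have hLHS : aMult f (m * (r * j')) ζ = c (j'.factorization p) := by
            rw [hidx, MS_aMult_scale hdeg2 (hN1 _) (hNfix _) (hNmul _) hwK]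
          rw [hLHS]
          have hj't : j' ∣ t := (dvd_mul_left j' r).trans hjdvd
          have hpe₀t : p ^ (j'.factorization p) ≤ t :=
            Nat.le_of_dvd (Nat.pos_of_ne_zero ht) (hwdvd.trans hj't)
          have he₀t : j'.factorization p ≤ t :=
            le_trans (Nat.le_of_lt (Nat.lt_pow_self hprime.one_lt)) hpe₀t
          have hind : ∀ e : ℕ, (r * p ^ e ∣ r * j') ↔ e ≤ j'.factorization p := by
            intro e
            rw [Nat.mul_dvd_mul_iff_left hr0]
            exact hprime.pow_dvd_iff_le_factorization hj'0
          have hcong : ∀ e ∈ Finset.range (t + 1),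
              δ e * (if r * p ^ e ∣ r * j' then 1 else 0) =
              if e ∈ Finset.range (j'.factorization p + 1) then δ e else 0 := by
            intro e he
            by_cases h : e ≤ j'.factorization p
            · rw [if_pos ((hind e).mpr h), if_pos (Finset.mem_range.mpr (by omega)), mul_one]
            · rw [if_neg (fun hh => h ((hind e).mp hh)),
                if_neg (by simp only [Finset.mem_range]; omega), mul_zero]
          rw [Finset.sum_congr rfl hcong, Finset.sum_ite_mem,
            Finset.inter_eq_right.mpr (Finset.range_subset_range.mpr (by omega)),
            htel (j'.factorization p)]
          ring
        · rw [hone _ hrj]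
          have hz : ∀ e ∈ Finset.range (t + 1),
              δ e * (if r * p ^ e ∣ j then 1 else 0) = 0 := by
            intro e he
            rw [if_neg (fun h => hrj ((dvd_mul_right r (p ^ e)).trans h)), mul_zero]
          rw [Finset.sum_eq_zero hz]
          simp
      have hge : ∀ t : ℕ, t ≠ 0 → (t = 1 ∨ ∃ e, t = r * p ^ e) → 1 ≤ aStar f (m * t) ζ := by
        intro t ht hcases
        rw [hform t ht]
        have hnn : ∀ e ∈ Finset.range (t + 1),
            (0:ℤ) ≤ δ e * (if t = r * p ^ e then 1 else 0) :=
          fun e _ => mul_nonneg (le_trans zero_le_one (hδpos e)) (by split <;> norm_num)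
        have hnn1 : (0:ℤ) ≤ (if t = 1 then 1 else 0) := by split <;> norm_num
        rcases hcases with h | ⟨e, h⟩
        · rw [if_pos h]
          have := Finset.sum_nonneg hnn
          linarith
        · have het : e < t + 1 := by
            have h1 : p ^ e ≤ r * p ^ e := Nat.le_mul_of_pos_left _ hr0
            have h2 : e < p ^ e := Nat.lt_pow_self hprime.one_lt
            omega
          have hsingle : δ e * (if t = r * p ^ e then 1 else 0) ≤
              ∑ e' ∈ Finset.range (t + 1), δ e' * (if t = r * p ^ e' then 1 else 0) :=
            Finset.single_le_sum hnn (Finset.mem_range.mpr het)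
          rw [if_pos h, mul_one] at hsingle
          have := hδpos e
          linarith
      constructor
      · intro h1
        have hdvd : m ∣ n := by
          by_contra hmn
          rw [hstar0 hmn] at h1; omega
        obtain ⟨t, rfl⟩ := hdvd
        have ht : t ≠ 0 := by rintro rfl; simp at hn
        by_contra hcon
        push_neg at hcon
        obtain ⟨hc1, hc2, hc3⟩ := hcon
        rw [hform t ht] at h1
        have ht1 : t ≠ 1 := by rintro rfl; exact hc1 (mul_one m)
        have hind0 : ∀ e ∈ Finset.range (t + 1),
            δ e * (if t = r * p ^ e then 1 else 0) = 0 := by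
          intro e _
          rcases Nat.eq_zero_or_pos e with rfl | he1
          · rw [if_neg, mul_zero]
            intro hh
            rw [pow_zero, mul_one] at hh
            exact hc2 hfin (by rw [hh])
          · rw [if_neg, mul_zero]
            intro hh
            exact hc3 hp hfin e he1 (by rw [hh]; ring)
        rw [if_neg ht1, Finset.sum_eq_zero hind0] at h1
        omega
      · rintro (hcase | ⟨-, hcase⟩ | ⟨-, -, e, he1, hcase⟩)
        · have h2 := hge 1 one_ne_zero (Or.inl rfl)
          rwa [mul_one, ← hcase] at h2
        · rw [hcase]
          exact hge r hr0.ne' (Or.inr ⟨0, by rw [pow_zero, mul_one]⟩)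
        · have h2 : p ^ e * m * r = m * (r * p ^ e) := by ring
          rw [hcase, h2]
          exact hge (r * p ^ e) (by positivity) (Or.inr ⟨e, rfl⟩)
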